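/- arXiv:1306.0056 — 2 statements merged into one kernel-verified Lean document; each statement's English description precedes it below -/
import Mathlib

section
/- Let p be a prime and n a natural number. Let λ_0 < λ_1 < … < λ_j be a strictly increasing chain of proper nontrivial setoids on Fin n with stabilizer K ≤ Σ_n; set λ_{j+1} = ⊤. Let D ≤ K be an elementary abelian p-subgroup acting freely on Fin n, and let i with 0 ≤ i ≤ j+1 be such that D acts transitively on the set of λ_i-classes and no non-identity element of D maps every λ_i-class to itself. Fix a ∈ Fin n and let J = {σ ∈ K : σ x = x for every x with ¬(x ∼_{λ_i} a)}, a subgroup of K. For σ ∈ J the conjugates d σ d⁻¹ for d ∈ D commute pairwise, so f(σ) := ∏_{d ∈ D} d σ d⁻¹ is a well-defined element of Σ_n. Then f : J → Σ_n is an injective group homomorphism, for every σ ∈ J the element f(σ) lies in K and commutes with every element of D, and f(σ) ∈ D implies σ = 1 (i.e., f(J) ∩ D = {1}). -/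
lemma noncommProd_apply_fix {ι α : Type*} (s : Finset ι)
    (g : ι → Equiv.Perm α) (h : (s : Set ι).Pairwise (fun a b => Commute (g a) (g b)))
    (x : α) (hfix : ∀ e ∈ s, g e x = x) :
    s.noncommProd g h x = x := by
  classical
  induction s using Finset.induction_on with
  | empty => simp
  | @insert b s hb ih =>
    rw [Finset.noncommProd_insert_of_notMem _ _ _ _ hb]
    rw [Equiv.Perm.mul_apply, ih _ (fun e he => hfix e (Finset.mem_insert_of_mem he)),
      hfix b (Finset.mem_insert_self _ _)]

lemma noncommProd_apply_eq {ι α : Type*} (s : Finset ι)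
    (g : ι → Equiv.Perm α) (h : (s : Set ι).Pairwise (fun a b => Commute (g a) (g b)))
    (x : α) (d₀ : ι) (hd₀ : d₀ ∈ s)
    (hother : ∀ e ∈ s, e ≠ d₀ → g e x = x ∧ g e (g d₀ x) = g d₀ x) :
    s.noncommProd g h x = g d₀ x := by
  classical
  induction s using Finset.induction_on with
  | empty => exact absurd hd₀ (Finset.notMem_empty _)
  | @insert b s hb ih =>
    rw [Finset.noncommProd_insert_of_notMem _ _ _ _ hb, Equiv.Perm.mul_apply]
    rcases eq_or_ne b d₀ with rfl | hbne
    · rw [noncommProd_apply_fix s g _ x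
        (fun e he => (hother e (Finset.mem_insert_of_mem he) (fun hh => hb (hh ▸ he))).1)]
    · have hd₀s : d₀ ∈ s := by
        rcases Finset.mem_insert.mp hd₀ with h1 | h1
        · exact absurd h1.symm hbne
        · exact h1
      rw [ih _ hd₀s (fun e he hne => hother e (Finset.mem_insert_of_mem he) hne)]
      exact (hother b (Finset.mem_insert_self _ _) hbne).2

/-- The chain `λ_0 < … < λ_j` extended by `λ_{-1} = ⊥` and `λ_{j+1} = ⊤`, reindexed so
that `extChain lam (i + 1) = λ_i` for `0 ≤ i ≤ j`, `extChain lam 0 = ⊥`, and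
`extChain lam (j + 2) = ⊤`. -/
def extChain {n j : ℕ} (lam : Fin (j + 1) → Setoid (Fin n)) : ℕ → Setoid (Fin n)
  | 0 => ⊥
  | t + 1 => if h : t < j + 1 then lam ⟨t, h⟩ else ⊤


/-- In the situation of the chain `λ_0 < … < λ_j` with stabilizer
`K`, `D ≤ K` elementary abelian acting freely on `Fin n`, and `i ≤ j + 1` such that
`D` acts freely and transitively on the set of `λ_i`-classes: fixing `a : Fin n` and
letting `J = {σ ∈ K : σ x = x whenever ¬(x ∼_{λ_i} a)}`, the conjugates `d σ d⁻¹`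
(`d ∈ D`) of any `σ ∈ J` commute pairwise, and `f(σ) = ∏_{d ∈ D} d σ d⁻¹` defines an
injective group homomorphism `f : J → Σ_n` whose values lie in `K`, centralize `D`,
and meet `D` only at the identity. -/
theorem stmt16 (p n j : ℕ) (hp : p.Prime)
    (lam : Fin (j + 1) → Setoid (Fin n)) (hmono : StrictMono lam)
    (hproper : ∀ t, ⊥ < lam t ∧ lam t < ⊤)
    (K : Subgroup (Equiv.Perm (Fin n)))
    (hK : ∀ g, g ∈ K ↔ ∀ (t : Fin (j + 1)) (x y : Fin n),
      (lam t).r x y ↔ (lam t).r (g x) (g y))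
    (D : Subgroup (Equiv.Perm (Fin n))) [Fintype D] (hDK : D ≤ K)
    (hab : ∀ a ∈ D, ∀ b ∈ D, a * b = b * a)
    (hexp : ∀ d ∈ D, d ^ p = 1)
    (hfree : ∀ d ∈ D, d ≠ 1 → ∀ x : Fin n, d x ≠ x)
    (i : ℕ) (hi : i ≤ j + 1)
    (htrans : ∀ x y : Fin n, ∃ d ∈ D, (extChain lam (i + 1)).r (d x) y)
    (hS : ∀ d ∈ D, (∀ x : Fin n, (extChain lam (i + 1)).r (d x) x) → d = 1)
    (a : Fin n)
    (J : Subgroup (Equiv.Perm (Fin n)))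
    (hJ : ∀ σ, σ ∈ J ↔ σ ∈ K ∧
      ∀ x : Fin n, ¬ (extChain lam (i + 1)).r x a → σ x = x) :
    (∀ σ ∈ J, ∀ d₁ d₂ : D,
      Commute ((d₁ : Equiv.Perm (Fin n)) * σ * (d₁ : Equiv.Perm (Fin n))⁻¹)
        ((d₂ : Equiv.Perm (Fin n)) * σ * (d₂ : Equiv.Perm (Fin n))⁻¹)) ∧
    ∃ f : J →* Equiv.Perm (Fin n),
      Function.Injective f ∧
      (∀ σ : J, f σ ∈ K) ∧
      (∀ σ : J, ∀ d ∈ D, Commute (f σ) d) ∧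
      (∀ σ : J, f σ ∈ D → σ = 1) ∧
      (∀ (σ : J)
        (hc : ((Finset.univ : Finset D) : Set D).Pairwise fun d₁ d₂ =>
          Commute
            ((d₁ : Equiv.Perm (Fin n)) * (σ : Equiv.Perm (Fin n)) *
              (d₁ : Equiv.Perm (Fin n))⁻¹)
            ((d₂ : Equiv.Perm (Fin n)) * (σ : Equiv.Perm (Fin n)) *
              (d₂ : Equiv.Perm (Fin n))⁻¹)),
        f σ = (Finset.univ : Finset D).noncommProd
          (fun d : D => (d : Equiv.Perm (Fin n)) * (σ : Equiv.Perm (Fin n)) *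
            (d : Equiv.Perm (Fin n))⁻¹) hc) := by
  classical
  set L := extChain lam (i + 1) with hL
  have hsymm : ∀ {x y}, L.r x y → L.r y x := fun h => L.iseqv.symm h
  have htr : ∀ {x y z}, L.r x y → L.r y z → L.r x z := fun h h' => L.iseqv.trans h h'
  -- members of K preserve L
  have hKpres : ∀ g ∈ K, ∀ x y : Fin n, L.r x y ↔ L.r (g x) (g y) := by
    intro g hg x y
    by_cases hci : i < j + 1
    · have hLe : L = lam ⟨i, hci⟩ := by rw [hL]; simp [extChain, hci]
      rw [hLe]
      exact (hK g).mp hg ⟨i, hci⟩ x y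
    · have hLe : L = ⊤ := by rw [hL]; simp [extChain, hci]
      rw [hLe]
      constructor <;> (intro _; trivial)
  -- if some point's class is preserved by d ∈ D, then d = 1
  have keyD : ∀ g ∈ D, (∃ x : Fin n, L.r (g x) x) → g = 1 := by
    rintro g hg ⟨x₀, hx₀⟩
    apply hS g hg
    intro y
    obtain ⟨e, he, hey⟩ := htrans x₀ y
    have h1 : L.r (e (g x₀)) (e x₀) := (hKpres e (hDK he) _ _).mp hx₀
    have h2 : L.r (g (e x₀)) (e x₀) := by
      have hcomm : g (e x₀) = e (g x₀) := by
        have := hab e he g hg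
        calc g (e x₀) = (g * e) x₀ := rfl
          _ = (e * g) x₀ := by rw [← this]
          _ = e (g x₀) := rfl
      rw [hcomm]; exact h1
    have h3 : L.r (g (e x₀)) (g y) := (hKpres g (hDK hg) _ _).mp hey
    exact htr (htr (hsymm h3) h2) hey
  -- uniqueness of representatives
  have hrepu : ∀ d₁ d₂ : D, L.r ((d₁ : Equiv.Perm (Fin n)) a) ((d₂ : Equiv.Perm (Fin n)) a) →
      d₁ = d₂ := by
    intro d₁ d₂ h
    have h2 : L.r (((d₂ : Equiv.Perm (Fin n))⁻¹ * d₁) a) a := by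
      have := (hKpres _ (hDK (inv_mem d₂.2)) _ _).mp h
      simpa [Equiv.Perm.mul_apply] using this
    have h3 : ((d₂ : Equiv.Perm (Fin n))⁻¹ * d₁) = 1 :=
      keyD _ (mul_mem (inv_mem d₂.2) d₁.2) ⟨a, h2⟩
    exact (Subtype.ext (inv_mul_eq_one.mp h3)).symm
  -- basic facts about σ ∈ J
  have hfix : ∀ σ ∈ J, ∀ x : Fin n, ¬ L.r x a → σ x = x := fun σ hσ => ((hJ σ).mp hσ).2
  have hinv : ∀ σ ∈ J, ∀ x : Fin n, L.r x a → L.r (σ x) a := by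
    intro σ hσ x hx
    by_contra hc
    have h1 : σ (σ x) = σ x := hfix σ hσ _ hc
    have h2 : σ x = x := σ.injective h1
    rw [h2] at hc; exact hc hx
  -- conjugates move points only inside the class of (d a)
  have hmoves : ∀ σ ∈ J, ∀ d ∈ D, ∀ x : Fin n,
      (d * σ * d⁻¹ : Equiv.Perm (Fin n)) x ≠ x → L.r x (d a) := by
    intro σ hσ d hd x hmx
    by_contra hc
    have h1 : ¬ L.r (d⁻¹ x) a := by
      intro hh
      have := (hKpres d (hDK hd) _ _).mp hh
      simp only [Equiv.Perm.inv_def, Equiv.apply_symm_apply] at this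
      exact hc this
    apply hmx
    rw [Equiv.Perm.mul_apply, Equiv.Perm.mul_apply, hfix σ hσ _ h1]
    simp
  -- conjugates preserve classes
  have hconjclass : ∀ σ ∈ J, ∀ (d : D) (x : Fin n),
      L.r ((d : Equiv.Perm (Fin n)) a) x →
      L.r (((d : Equiv.Perm (Fin n)) * σ * (d : Equiv.Perm (Fin n))⁻¹) x) x := by
    intro σ hσ d x hx
    have h1 : L.r ((d : Equiv.Perm (Fin n))⁻¹ x) a := by
      have := (hKpres _ (hDK (inv_mem d.2)) _ _).mp hx
      simpa using hsymm this
    have h2 : L.r (σ ((d : Equiv.Perm (Fin n))⁻¹ x)) a := hinv σ hσ _ h1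
    have h3 := (hKpres _ (hDK d.2) _ _).mp h2
    have h4 : (((d : Equiv.Perm (Fin n)) * σ * (d : Equiv.Perm (Fin n))⁻¹) x)
        = (d : Equiv.Perm (Fin n)) (σ ((d : Equiv.Perm (Fin n))⁻¹ x)) := by
      simp [Equiv.Perm.mul_apply]
    rw [h4]
    exact htr h3 hx
  -- pairwise commuting
  have hcomm : ∀ σ ∈ J, ∀ d₁ d₂ : D,
      Commute ((d₁ : Equiv.Perm (Fin n)) * σ * (d₁ : Equiv.Perm (Fin n))⁻¹)
        ((d₂ : Equiv.Perm (Fin n)) * σ * (d₂ : Equiv.Perm (Fin n))⁻¹) := by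
    intro σ hσ d₁ d₂
    rcases eq_or_ne d₁ d₂ with rfl | hne
    · exact Commute.refl _
    · apply Equiv.Perm.Disjoint.commute
      intro x
      by_contra hboth
      push_neg at hboth
      exact hne (hrepu d₁ d₂ (htr (hsymm (hmoves σ hσ _ d₁.2 x hboth.1))
        (hmoves σ hσ _ d₂.2 x hboth.2)))
  have hpc : ∀ σ : J, ((Finset.univ : Finset D) : Set D).Pairwise fun d₁ d₂ =>
      Commute ((d₁ : Equiv.Perm (Fin n)) * (σ : Equiv.Perm (Fin n)) *
        (d₁ : Equiv.Perm (Fin n))⁻¹)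
        ((d₂ : Equiv.Perm (Fin n)) * (σ : Equiv.Perm (Fin n)) *
          (d₂ : Equiv.Perm (Fin n))⁻¹) :=
    fun σ d₁ _ d₂ _ _ => hcomm (σ : Equiv.Perm (Fin n)) σ.2 d₁ d₂
  set f₀ : J → Equiv.Perm (Fin n) := fun σ =>
    (Finset.univ : Finset D).noncommProd
      (fun d : D => (d : Equiv.Perm (Fin n)) * (σ : Equiv.Perm (Fin n)) *
        (d : Equiv.Perm (Fin n))⁻¹) (hpc σ) with hf₀
  -- evaluation
  have heval : ∀ (σ : J) (x : Fin n) (d₀ : D), L.r ((d₀ : Equiv.Perm (Fin n)) a) x →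
      f₀ σ x = ((d₀ : Equiv.Perm (Fin n)) * (σ : Equiv.Perm (Fin n)) *
        (d₀ : Equiv.Perm (Fin n))⁻¹) x := by
    intro σ x d₀ hx
    apply noncommProd_apply_eq _ _ _ x d₀ (Finset.mem_univ _)
    intro e _ hne
    constructor
    · by_contra h
      exact hne (hrepu e d₀ (htr (hsymm (hmoves _ σ.2 _ e.2 x h)) (hsymm hx)))
    · by_contra h
      have hy := hmoves _ σ.2 _ e.2 _ h
      have hyx := hconjclass _ σ.2 d₀ x hx
      exact hne (hrepu e d₀ (htr (hsymm hy) (htr hyx (hsymm hx))))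
  -- multiplicativity
  have hmul : ∀ σ τ : J, f₀ (σ * τ) = f₀ σ * f₀ τ := by
    intro σ τ
    ext x
    obtain ⟨d₀p, hd₀D, hd₀⟩ := htrans a x
    set d₀ : D := ⟨d₀p, hd₀D⟩ with hd₀def
    have hx : L.r ((d₀ : Equiv.Perm (Fin n)) a) x := hd₀
    have hy : L.r ((d₀ : Equiv.Perm (Fin n)) a)
        (((d₀ : Equiv.Perm (Fin n)) * (τ : Equiv.Perm (Fin n)) *
          (d₀ : Equiv.Perm (Fin n))⁻¹) x) :=
      htr hx (hsymm (hconjclass _ τ.2 d₀ x hx))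
    rw [Equiv.Perm.mul_apply, heval (σ * τ) x d₀ hx, heval τ x d₀ hx, heval σ _ d₀ hy]
    simp [Equiv.Perm.mul_apply]
  -- the homomorphism
  set f : J →* Equiv.Perm (Fin n) := MonoidHom.mk' f₀ hmul with hf
  -- kernel is trivial
  have hker : ∀ σ : J, f₀ σ = 1 → σ = 1 := by
    intro σ h
    have hone : (σ : Equiv.Perm (Fin n)) = 1 := by
      apply Equiv.ext
      intro x
      show (σ : Equiv.Perm (Fin n)) x = x
      by_cases hx : L.r x a
      · have h1 : L.r (((1 : D) : Equiv.Perm (Fin n)) a) x := by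
          simpa using hsymm hx
        have h2 := heval σ x 1 h1
        rw [h] at h2
        simpa [Equiv.Perm.mul_apply] using h2.symm
      · exact hfix _ σ.2 x hx
    exact OneMemClass.coe_eq_one.mp hone
  have hinj : Function.Injective f := by
    rw [injective_iff_map_eq_one]
    exact hker
  -- values in K
  have hfK : ∀ σ : J, f₀ σ ∈ K := by
    intro σ
    apply Subgroup.noncommProd_mem
    intro d _
    exact mul_mem (mul_mem (hDK d.2) ((hJ _).mp σ.2).1) (inv_mem (hDK d.2))
  -- centralizes D
  have hcd : ∀ (σ : J), ∀ d ∈ D, Commute (f₀ σ) d := by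
    intro σ d hd
    show f₀ σ * d = d * f₀ σ
    ext x
    simp only [Equiv.Perm.mul_apply]
    obtain ⟨d₀p, hd₀D, hd₀⟩ := htrans a x
    set d₀ : D := ⟨d₀p, hd₀D⟩ with hd₀def
    have hx : L.r ((d₀ : Equiv.Perm (Fin n)) a) x := hd₀
    set d' : D := ⟨d, hd⟩ * d₀ with hd'def
    have h1 : L.r ((d' : Equiv.Perm (Fin n)) a) (d x) := by
      have := (hKpres d (hDK hd) _ _).mp hd₀
      simpa [hd'def, Equiv.Perm.mul_apply] using this
    rw [heval σ (d x) d' h1, heval σ x d₀ hx]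
    simp [hd'def, Equiv.Perm.mul_apply]
  -- meets D trivially
  have hD1 : ∀ σ : J, f₀ σ ∈ D → σ = 1 := by
    intro σ hmem
    apply hker
    apply hS _ hmem
    intro x
    obtain ⟨d₀p, hd₀D, hd₀⟩ := htrans a x
    rw [heval σ x ⟨d₀p, hd₀D⟩ hd₀]
    exact hconjclass _ σ.2 ⟨d₀p, hd₀D⟩ x hd₀
  exact ⟨hcomm, f, hinj, hfK, hcd, hD1, fun σ hc => rfl⟩
end

section
/- Let p be a prime and n a natural number. Let D be a nontrivial elementary abelian p-subgroup of Σ_n that acts freely and not transitively on Fin n, and let C be the centralizer of D in Σ_n. Then p divides the index [C : D]. -/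
/-- Let `p` be a prime and `D` a nontrivial elementary abelian
`p`-subgroup of `Σ_n` acting freely and not transitively on `Fin n`, with centralizer
`C` in `Σ_n`.  Then `p` divides the index `[C : D]`. -/
theorem stmt17 (p n : ℕ) (hp : p.Prime)
    (D : Subgroup (Equiv.Perm (Fin n))) (hD : D ≠ ⊥)
    (hab : ∀ a ∈ D, ∀ b ∈ D, a * b = b * a)
    (hexp : ∀ d ∈ D, d ^ p = 1)
    (hfree : ∀ d ∈ D, d ≠ 1 → ∀ x : Fin n, d x ≠ x)
    (hntrans : ¬ ∀ x y : Fin n, ∃ d ∈ D, d x = y) :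
    p ∣ D.relIndex (Subgroup.centralizer (D : Set (Equiv.Perm (Fin n)))) := by
  classical
  set C := Subgroup.centralizer (D : Set (Equiv.Perm (Fin n))) with hC
  -- get a nontrivial element of D
  obtain ⟨⟨d, hd⟩, hd1⟩ := Subgroup.ne_bot_iff_exists_ne_one.mp hD
  have hd1' : d ≠ 1 := by
    simpa [Subtype.ext_iff] using hd1
  -- get a point y not in the D-orbit of x
  push_neg at hntrans
  obtain ⟨x, y, hxy⟩ := hntrans
  -- the orbit of x
  set O : Fin n → Prop := fun z => ∃ c ∈ D, c x = z with hO_def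
  have hO1 : ∀ c ∈ D, ∀ z, O z → O (c z) := by
    rintro c hc z ⟨e, he, hez⟩
    exact ⟨c * e, D.mul_mem hc he, by simp [hez]⟩
  have hO : ∀ c ∈ D, ∀ z, O (c z) ↔ O z := by
    intro c hc z
    refine ⟨fun h => ?_, hO1 c hc z⟩
    have := hO1 c⁻¹ (D.inv_mem hc) _ h
    simpa using this
  have hOx : O x := ⟨1, D.one_mem, rfl⟩
  have hOy : ¬ O y := by
    rintro ⟨c, hc, hcx⟩
    exact hxy c hc hcx
  -- the permutation acting as d on O and trivially elsewhere
  set g : Equiv.Perm (Fin n) :=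
    { toFun := fun z => if O z then d z else z
      invFun := fun z => if O z then d⁻¹ z else z
      left_inv := by
        intro z
        by_cases h : O z
        · simp [h, (hO d hd z).mpr h]
        · simp [h]
      right_inv := by
        intro z
        by_cases h : O z
        · have h' : O (d⁻¹ z) := (hO d⁻¹ (D.inv_mem hd) z).mpr h
          simp only [Equiv.Perm.inv_def] at h'
          simp [h, h']
        · simp [h] } with hg_def
  have hg_apply : ∀ z, g z = if O z then d z else z := fun z => rfl
  have hgx : g x = d x := by rw [hg_apply, if_pos hOx]
  have hgy : g y = y := by rw [hg_apply, if_neg hOy]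
  have hgne1 : g ≠ 1 := by
    intro h
    have : d x = x := by rw [← hgx, h]; rfl
    exact hfree d hd hd1' x this
  -- g commutes with D
  have hgC : g ∈ C := by
    rw [hC, Subgroup.mem_centralizer_iff]
    intro h hh
    refine Equiv.ext fun z => ?_
    simp only [Equiv.Perm.coe_mul, Function.comp_apply]
    rw [hg_apply, hg_apply]
    by_cases hz : O z
    · rw [if_pos hz, if_pos ((hO h hh z).mpr hz)]
      have := hab h hh d hd
      have := congrArg (fun (e : Equiv.Perm (Fin n)) => e z) this
      simpa using this
    · rw [if_neg hz, if_neg (fun h' => hz ((hO h hh z).mp h'))]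
  have hDC : D ≤ C := by
    intro a ha
    rw [hC, Subgroup.mem_centralizer_iff]
    intro h hh
    exact hab h hh a ha
  -- powers of g
  have hgpow : ∀ (k : ℕ) (z : Fin n), (g ^ k) z = if O z then (d ^ k) z else z := by
    intro k
    induction k with
    | zero => intro z; simp
    | succ k ih =>
      intro z
      rw [pow_succ, Equiv.Perm.mul_apply, hg_apply]
      by_cases hz : O z
      · rw [if_pos hz, ih (d z), if_pos ((hO d hd z).mpr hz), if_pos hz,
          ← Equiv.Perm.mul_apply, ← pow_succ]
      · rw [if_neg hz, ih z, if_neg hz, if_neg hz]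
  have hgp : g ^ p = 1 := by
    ext z
    rw [hgpow p z]
    by_cases hz : O z
    · rw [if_pos hz, hexp d hd]
    · rw [if_neg hz]; rfl
  have hgD : g ∉ D := by
    intro hgD
    exact hfree g hgD hgne1 y hgy
  -- the subgroup generated by D and g
  set E : Subgroup (Equiv.Perm (Fin n)) := D ⊔ Subgroup.zpowers g with hE
  have hgE : g ∈ E := Subgroup.mem_sup_right (Subgroup.mem_zpowers g)
  have hDE : D ≤ E := le_sup_left
  have hEC : E ≤ C := sup_le hDC (by
    rintro _ ⟨i, rfl⟩
    exact Subgroup.zpow_mem C hgC i)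
  have hcomm : ∀ a ∈ D, Commute g a := by
    intro a ha
    have : a * g = g * a := by
      have := (Subgroup.mem_centralizer_iff.mp hgC) a ha
      exact this
    exact this.symm
  -- every element of E has the form a * g ^ i
  have hEform : ∀ e ∈ E, ∃ a ∈ D, ∃ i : ℤ, e = a * g ^ i := by
    set T : Subgroup (Equiv.Perm (Fin n)) :=
      { carrier := {w | ∃ a ∈ D, ∃ i : ℤ, w = a * g ^ i}
        mul_mem' := by
          rintro u v ⟨a, ha, i, rfl⟩ ⟨b, hb, j, rfl⟩
          refine ⟨a * b, D.mul_mem ha hb, i + j, ?_⟩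
          have hcb : Commute (g ^ i) b := ((hcomm b hb).zpow_left i)
          rw [mul_assoc, ← mul_assoc (g ^ i) b (g ^ j), hcb.eq, mul_assoc, ← zpow_add,
            ← mul_assoc]
        one_mem' := ⟨1, D.one_mem, 0, by simp⟩
        inv_mem' := by
          rintro u ⟨a, ha, i, rfl⟩
          refine ⟨a⁻¹, D.inv_mem ha, -i, ?_⟩
          have hcb : Commute (g ^ (-i)) a⁻¹ := ((hcomm a⁻¹ (D.inv_mem ha)).zpow_left (-i))
          rw [mul_inv_rev, ← zpow_neg, hcb.eq] } with hT
    have hET : E ≤ T := by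
      refine sup_le ?_ ?_
      · intro a ha
        exact ⟨a, ha, 0, by simp⟩
      · rintro _ ⟨i, rfl⟩
        exact ⟨1, D.one_mem, i, by simp⟩
    exact fun e he => hET he
  -- E is a p-group
  have hEexp : ∀ e ∈ E, e ^ p = 1 := by
    intro e he
    obtain ⟨a, ha, i, rfl⟩ := hEform e he
    have hca : Commute a (g ^ i) := ((hcomm a ha).zpow_left i).symm
    rw [hca.mul_pow, hexp a ha, one_mul]
    have : (g ^ i) ^ p = (g ^ p) ^ i := by
      rw [← zpow_natCast (g ^ i) p, ← zpow_mul, mul_comm, zpow_mul, zpow_natCast]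
    rw [this, hgp, one_zpow]
  haveI : Fact p.Prime := ⟨hp⟩
  have hEpgroup : IsPGroup p E := by
    intro e
    refine ⟨1, ?_⟩
    rw [pow_one]
    exact Subtype.ext (by simpa using hEexp (e : Equiv.Perm (Fin n)) e.2)
  obtain ⟨k, hk⟩ := (IsPGroup.iff_card (p := p) (G := E)).mp hEpgroup
  -- the relative index of D in E is a nontrivial p-power
  have hdvd1 : D.relIndex E ∣ p ^ k := by
    rw [← hk]
    exact Subgroup.index_dvd_card (H := D.subgroupOf E)
  have hne1 : D.relIndex E ≠ 1 := by
    intro h1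
    exact hgD (Subgroup.relIndex_eq_one.mp h1 hgE)
  have hpdvd : p ∣ D.relIndex E := by
    obtain ⟨m, hm, hme⟩ := (Nat.dvd_prime_pow hp).mp hdvd1
    rcases m with _ | m
    · exact absurd (by simpa using hme) hne1
    · rw [hme]
      exact dvd_pow_self p m.succ_ne_zero
  calc p ∣ D.relIndex E := hpdvd
    _ ∣ D.relIndex E * E.relIndex C := dvd_mul_right _ _
    _ = D.relIndex C := Subgroup.relIndex_mul_relIndex (H := D) (K := E) (L := C) hDE hEC
end
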